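/- For any a ∈ [0,1] and δ ∈ [0,1/2], the function a ↦ h_b(a) − a·h_b(2δ(1−a)) − (1−a)·h_b(2δa) is at most 1 − h_b(δ), with equality at a = 1/2. -/

import Mathlib

open Finset Real

/-- Binary entropy (in bits). -/
noncomputable def binEnt (x : ℝ) : ℝ :=
  -(x * Real.logb 2 x) - (1 - x) * Real.logb 2 (1 - x)

lemma binEnt_eq (x : ℝ) : binEnt x = Real.binEntropy x / Real.log 2 := by
  unfold binEnt Real.binEntropy
  rw [Real.log_inv, Real.log_inv, Real.logb, Real.logb]
  ring

/-- the derivative of `Wfun` -/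
noncomputable def Vfun (a : ℝ) : ℝ → ℝ := fun x =>
  a * ((Real.log (1 - 2*(1-a)*x) - Real.log (2*(1-a)*x)) * (2*(1-a)))
  + (1-a) * ((Real.log (1 - 2*a*x) - Real.log (2*a*x)) * (2*a))
  - (Real.log (1-x) - Real.log x)

/-- the slack in the inequality, as a function of `δ` -/
noncomputable def Wfun (a : ℝ) : ℝ → ℝ := fun x =>
  Real.log 2 - Real.binEntropy x - Real.binEntropy a
  + a * Real.binEntropy (2*(1-a)*x) + (1-a) * Real.binEntropy (2*a*x)

/-- the derivative of `Vfun` -/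
noncomputable def Vd (a : ℝ) (x : ℝ) : ℝ :=
  (1-2*a)^2/x + 1/(1-x) - 4*a*(1-a)^2/(1 - 2*(1-a)*x) - 4*a^2*(1-a)/(1 - 2*a*x)

lemma W_hasDeriv (a : ℝ) (ha0 : 0 < a) (ha1 : a < 1) (x : ℝ) (hx0 : 0 < x) (hx1 : x < 1/2) :
    HasDerivAt (Wfun a) (Vfun a x) x := by
  have hp0 : (0:ℝ) < 2*(1-a)*x := by nlinarith
  have hp1 : 2*(1-a)*x < 1 := by nlinarith
  have hq0 : (0:ℝ) < 2*a*x := by nlinarith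
  have hq1 : 2*a*x < 1 := by nlinarith
  have hlin1 : HasDerivAt (fun y : ℝ => 2*(1-a)*y) (2*(1-a)) x := by
    simpa using (hasDerivAt_id x).const_mul (2*(1-a))
  have hlin2 : HasDerivAt (fun y : ℝ => 2*a*y) (2*a) x := by
    simpa using (hasDerivAt_id x).const_mul (2*a)
  have h1 : HasDerivAt (fun y : ℝ => Real.binEntropy (2*(1-a)*y))
      ((Real.log (1 - 2*(1-a)*x) - Real.log (2*(1-a)*x)) * (2*(1-a))) x :=
    (Real.hasDerivAt_binEntropy hp0.ne' hp1.ne).comp x hlin1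
  have h2 : HasDerivAt (fun y : ℝ => Real.binEntropy (2*a*y))
      ((Real.log (1 - 2*a*x) - Real.log (2*a*x)) * (2*a)) x :=
    (Real.hasDerivAt_binEntropy hq0.ne' hq1.ne).comp x hlin2
  have h3 : HasDerivAt (fun y : ℝ => Real.binEntropy y)
      (Real.log (1 - x) - Real.log x) x :=
    Real.hasDerivAt_binEntropy hx0.ne' (by linarith)
  have := ((((hasDerivAt_const x (Real.log 2)).sub h3).sub
      (hasDerivAt_const x (Real.binEntropy a))).add (h1.const_mul a)).add (h2.const_mul (1-a))
  refine this.congr_deriv ?_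
  unfold Vfun
  ring

lemma V_hasDeriv (a : ℝ) (ha0 : 0 < a) (ha1 : a < 1) (x : ℝ) (hx0 : 0 < x) (hx1 : x ≤ 1/2) :
    HasDerivAt (Vfun a) (Vd a x) x := by
  have hp0 : (0:ℝ) < 2*(1-a)*x := by nlinarith
  have hp1 : 0 < 1 - 2*(1-a)*x := by nlinarith
  have hq0 : (0:ℝ) < 2*a*x := by nlinarith
  have hq1 : 0 < 1 - 2*a*x := by nlinarith
  have hx1' : 0 < 1 - x := by linarith
  have hlin1 : HasDerivAt (fun y : ℝ => 2*(1-a)*y) (2*(1-a)) x := by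
    simpa using (hasDerivAt_id x).const_mul (2*(1-a))
  have hlin2 : HasDerivAt (fun y : ℝ => 2*a*y) (2*a) x := by
    simpa using (hasDerivAt_id x).const_mul (2*a)
  have hl1 : HasDerivAt (fun y : ℝ => Real.log (1 - 2*(1-a)*y))
      ((1 - 2*(1-a)*x)⁻¹ * (0 - 2*(1-a))) x :=
    (Real.hasDerivAt_log hp1.ne').comp x (h := fun y => 1 - 2*(1-a)*y) ((hasDerivAt_const x (1:ℝ)).sub hlin1)
  have hl2 : HasDerivAt (fun y : ℝ => Real.log (2*(1-a)*y)) ((2*(1-a)*x)⁻¹ * (2*(1-a))) x :=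
    (Real.hasDerivAt_log hp0.ne').comp x hlin1
  have hl3 : HasDerivAt (fun y : ℝ => Real.log (1 - 2*a*y)) ((1 - 2*a*x)⁻¹ * (0 - 2*a)) x :=
    (Real.hasDerivAt_log hq1.ne').comp x (h := fun y => 1 - 2*a*y) ((hasDerivAt_const x (1:ℝ)).sub hlin2)
  have hl4 : HasDerivAt (fun y : ℝ => Real.log (2*a*y)) ((2*a*x)⁻¹ * (2*a)) x :=
    (Real.hasDerivAt_log hq0.ne').comp x hlin2
  have hl5 : HasDerivAt (fun y : ℝ => Real.log (1 - y)) ((1-x)⁻¹ * (0 - 1)) x :=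
    (Real.hasDerivAt_log hx1'.ne').comp x ((hasDerivAt_const x (1:ℝ)).sub (hasDerivAt_id x))
  have hl6 : HasDerivAt Real.log x⁻¹ x := Real.hasDerivAt_log hx0.ne'
  have := ((((hl1.sub hl2).mul_const (2*(1-a))).const_mul a).add
      (((hl3.sub hl4).mul_const (2*a)).const_mul (1-a))).sub (hl5.sub hl6)
  refine this.congr_deriv ?_
  unfold Vd
  have h1 := hp1.ne'
  have h2 := hq1.ne'
  have h3 : (1:ℝ) - a ≠ 0 := by linarith
  have h4 := hx1'.ne'
  field_simp
  ring

lemma Vd_nonneg (a : ℝ) (ha0 : 0 < a) (ha1 : a < 1) (x : ℝ) (hx0 : 0 < x) (hx1 : x ≤ 1/2) :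
    0 ≤ Vd a x := by
  have hp1 : 0 < 1 - 2*(1-a)*x := by nlinarith
  have hq1 : 0 < 1 - 2*a*x := by nlinarith
  have hx1' : 0 < 1 - x := by linarith
  have key : Vd a x = (1-2*a)^2 * (1-2*x) / (x * (1-x) * (1 - 2*(1-a)*x) * (1 - 2*a*x)) := by
    unfold Vd
    rw [div_add_div _ _ hx0.ne' hx1'.ne', div_sub_div _ _ (by positivity) hp1.ne',
      div_sub_div _ _ (by positivity) hq1.ne', div_eq_div_iff (by positivity) (by positivity)]
    ring
  rw [key]
  apply div_nonneg
  · nlinarith [sq_nonneg (1-2*a)]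
  · positivity

lemma V_half (a : ℝ) : Vfun a (1/2) = 0 := by
  unfold Vfun
  rw [show 2*(1-a)*(1/2) = 1-a by ring, show (1:ℝ) - (1-a) = a by ring,
    show 2*a*(1/2) = a by ring, show (1:ℝ) - 1/2 = 1/2 by norm_num]
  ring

lemma V_nonpos (a : ℝ) (ha0 : 0 < a) (ha1 : a < 1) (x : ℝ) (hx0 : 0 < x) (hx1 : x < 1/2) :
    Vfun a x ≤ 0 := by
  have hmono : MonotoneOn (Vfun a) (Set.Icc x (1/2)) := by
    apply monotoneOn_of_deriv_nonneg (convex_Icc x (1/2))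
    · intro y hy
      have hy0 : 0 < y := lt_of_lt_of_le hx0 hy.1
      exact ((V_hasDeriv a ha0 ha1 y hy0 hy.2).continuousAt).continuousWithinAt
    · rw [interior_Icc]
      intro y hy
      exact (V_hasDeriv a ha0 ha1 y (hx0.trans hy.1)
        hy.2.le).differentiableAt.differentiableWithinAt
    · rw [interior_Icc]
      intro y hy
      rw [(V_hasDeriv a ha0 ha1 y (hx0.trans hy.1) hy.2.le).deriv]
      exact Vd_nonneg a ha0 ha1 y (hx0.trans hy.1) hy.2.le
  have := hmono (Set.mem_Icc.mpr ⟨le_refl x, hx1.le⟩)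
      (Set.mem_Icc.mpr ⟨hx1.le, le_refl _⟩) hx1.le
  rw [V_half a] at this
  exact this

lemma W_half (a : ℝ) : Wfun a (1/2) = 0 := by
  unfold Wfun
  rw [show 2*(1-a)*(1/2) = 1-a by ring, show 2*a*(1/2) = a by ring,
    show (1/2 : ℝ) = 2⁻¹ by norm_num, Real.binEntropy_two_inv, Real.binEntropy_one_sub]
  ring

lemma W_nonneg (a : ℝ) (ha0 : 0 < a) (ha1 : a < 1) (δ : ℝ) (hδ0 : 0 ≤ δ) (hδ1 : δ ≤ 1/2) :
    0 ≤ Wfun a δ := by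
  have hanti : AntitoneOn (Wfun a) (Set.Icc 0 (1/2)) := by
    apply antitoneOn_of_deriv_nonpos (convex_Icc 0 (1/2))
    · have : Continuous (Wfun a) := by
        unfold Wfun
        fun_prop
      exact this.continuousOn
    · rw [interior_Icc]
      intro y hy
      exact (W_hasDeriv a ha0 ha1 y hy.1 hy.2).differentiableAt.differentiableWithinAt
    · rw [interior_Icc]
      intro y hy
      rw [(W_hasDeriv a ha0 ha1 y hy.1 hy.2).deriv]
      exact V_nonpos a ha0 ha1 y hy.1 hy.2
  have := hanti (Set.mem_Icc.mpr ⟨hδ0, hδ1⟩)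
      (Set.mem_Icc.mpr ⟨by norm_num, le_refl _⟩) hδ1
  rw [W_half a] at this
  exact this

lemma core (a δ : ℝ) (ha0 : 0 ≤ a) (ha1 : a ≤ 1) (hδ0 : 0 ≤ δ) (hδ1 : δ ≤ 1/2) :
    Real.binEntropy a - a * Real.binEntropy (2*δ*(1-a)) - (1-a) * Real.binEntropy (2*δ*a)
      ≤ Real.log 2 - Real.binEntropy δ := by
  rcases eq_or_lt_of_le ha0 with h0 | h0
  · rw [← h0]
    norm_num
    linarith [Real.binEntropy_le_log_two (p := δ)]
  rcases eq_or_lt_of_le ha1 with h1 | h1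
  · rw [h1]
    simp only [sub_self, zero_mul, mul_zero, Real.binEntropy_zero, Real.binEntropy_one]
    have := Real.binEntropy_le_log_two (p := δ)
    linarith
  have := W_nonneg a h0 h1 δ hδ0 hδ1
  unfold Wfun at this
  rw [show 2*δ*(1-a) = 2*(1-a)*δ by ring, show 2*δ*a = 2*a*δ by ring]
  linarith

lemma binEnt_half : binEnt (1/2) = 1 := by
  rw [binEnt_eq, show (1/2 : ℝ) = 2⁻¹ by norm_num, Real.binEntropy_two_inv]
  rw [div_self (Real.log_ne_zero_of_pos_of_ne_one (by norm_num) (by norm_num))]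

/-- For `a ∈ [0,1]` and `δ ∈ [0,1/2]`, the function
`a ↦ h_b(a) − a h_b(2δ(1−a)) − (1−a) h_b(2δa)` is at most `1 − h_b(δ)`,
with equality at `a = 1/2`. -/
theorem one_bit_info_max (δ : ℝ) (hδ0 : 0 ≤ δ) (hδ1 : δ ≤ 1 / 2) :
    (∀ a ∈ Set.Icc (0 : ℝ) 1,
        binEnt a - a * binEnt (2 * δ * (1 - a)) - (1 - a) * binEnt (2 * δ * a) ≤
          1 - binEnt δ) ∧
      binEnt (1 / 2 : ℝ) - (1 / 2) * binEnt (2 * δ * (1 - 1 / 2)) -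
          (1 - 1 / 2) * binEnt (2 * δ * (1 / 2)) =
        1 - binEnt δ := by
  have hL : (0:ℝ) < Real.log 2 := Real.log_pos one_lt_two
  constructor
  · intro a ha
    have key := core a δ ha.1 ha.2 hδ0 hδ1
    calc binEnt a - a * binEnt (2 * δ * (1 - a)) - (1 - a) * binEnt (2 * δ * a)
        = (Real.binEntropy a - a * Real.binEntropy (2*δ*(1-a))
            - (1-a) * Real.binEntropy (2*δ*a)) / Real.log 2 := by
          rw [binEnt_eq, binEnt_eq, binEnt_eq]; ring
      _ ≤ (Real.log 2 - Real.binEntropy δ) / Real.log 2 := by gcongr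
      _ = 1 - binEnt δ := by
          rw [binEnt_eq]
          field_simp
  · rw [show 2 * δ * (1 - 1/2) = δ by ring, show 2 * δ * (1/2) = δ by ring, binEnt_half]
    ring
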